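/- Let S = ℂ[x,y,w]/(x·w − y²), and let M be the S-module with generators β₀, β₁, β₂, γ and relations y·β₀ − x·β₁, w·β₀ − y·β₁, y·β₁ − x·β₂, w·β₁ − y·β₂ (i.e. M is the cokernel of the map S⁴ → S⁴ whose matrix has columns (y, −x, 0, 0), (w, −y, 0, 0), (0, y, −x, 0), (0, w, −y, 0)). Let ev : M → M^∨∨ = Hom_S(Hom_S(M,S), S) be the natural evaluation map, ev(m)(φ) = φ(m). Then the cokernel of ev is a 1-dimensional ℂ-vector space; i.e. the length of Q = M^∨∨/M is 1. -/

import Mathlib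

noncomputable section
set_option synthInstance.maxHeartbeats 1000000
set_option maxHeartbeats 1000000
open MvPolynomial
/-- `S = ℂ[x,y,w]/(x·w − y²)`, the coordinate ring of the quadric cone `X₂`
(here `x = X 0`, `y = X 1`, `w = X 2`). -/
abbrev S : Type :=
  MvPolynomial (Fin 3) ℂ ⧸
    Ideal.span {(X 0 * X 2 - X 1 ^ 2 : MvPolynomial (Fin 3) ℂ)}


def xx : S := Ideal.Quotient.mk _ (X 0)
def yy : S := Ideal.Quotient.mk _ (X 1)
def ww : S := Ideal.Quotient.mk _ (X 2)

/-- The presentation matrix of `M`: its columns are the relation vectors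
`(y, −x, 0, 0)`, `(w, −y, 0, 0)`, `(0, y, −x, 0)`, `(0, w, −y, 0)`. -/
def relMatrix : Matrix (Fin 4) (Fin 4) S :=
  !![yy, ww, 0, 0; -xx, -yy, yy, ww; 0, 0, -xx, -yy; 0, 0, 0, 0]

/-- The map `S⁴ → S⁴` given by the presentation matrix. -/
def relMap : (Fin 4 → S) →ₗ[S] (Fin 4 → S) := Matrix.toLin' relMatrix

/-- `M`: the `S`-module with generators `β₀, β₁, β₂, γ` and relations
`y·β₀ − x·β₁`, `w·β₀ − y·β₁`, `y·β₁ − x·β₂`, `w·β₁ − y·β₂`,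
i.e. the cokernel of `relMap`. -/
abbrev M : Type := (Fin 4 → S) ⧸ LinearMap.range relMap

/-- The generators `β₀, β₁, β₂, γ` of `M` (as `gen 0, …, gen 3`). -/
def gen : Fin 4 → M := fun i => Submodule.Quotient.mk (Pi.single i (1 : S))

abbrev R3 : Type := MvPolynomial (Fin 3) ℂ
abbrev A2 : Type := MvPolynomial (Fin 2) ℂ
abbrev PA : Type := Polynomial A2
def q3 : R3 := X 0 * X 2 - X 1 ^ 2
def e : R3 ≃ₐ[ℂ] PA :=
  (renameEquiv ℂ (Equiv.swap 0 1)).trans (finSuccEquiv ℂ 2)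
lemma e_X0 : e (X 0) = Polynomial.C (X 0) := by
  simp [e, renameEquiv_apply, rename_X, Equiv.swap_apply_left]
  exact finSuccEquiv_X_succ (j := (0 : Fin 2))
lemma e_X1 : e (X 1) = Polynomial.X := by
  simp [e, renameEquiv_apply, rename_X, Equiv.swap_apply_right]
  exact finSuccEquiv_X_zero
lemma e_X2 : e (X 2) = Polynomial.C (X 1) := by
  have h2 : Equiv.swap (0 : Fin 3) 1 2 = 2 := by decide
  simp [e, renameEquiv_apply, rename_X, h2]
  exact finSuccEquiv_X_succ (j := (1 : Fin 2))
def mPA : PA := Polynomial.X ^ 2 - Polynomial.C (X 0 * X 1)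
lemma mPA_monic : mPA.Monic := Polynomial.monic_X_pow_sub_C _ (by norm_num)
lemma e_q3 : e q3 = -mPA := by
  rw [q3, mPA, map_sub, map_mul, map_pow, e_X0, e_X1, e_X2, ← Polynomial.C_mul]
  ring

/-- Embedding of `A2 = ℂ[x,w]` into `R3` as polynomials in `X 0, X 2`. -/
def emb : A2 →+* R3 :=
  (e.symm : PA →ₐ[ℂ] R3).toRingHom.comp (Polynomial.C : A2 →+* PA)

lemma e_emb (a : A2) : e (emb a) = Polynomial.C a := by
  simp [emb]

lemma emb_X0 : emb (X 0) = X 0 := by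
  apply e.injective; rw [e_emb, e_X0]

lemma emb_X1 : emb (X 1) = X 2 := by
  apply e.injective; rw [e_emb, e_X2]

lemma emb_injective : Function.Injective emb := by
  intro a b h
  have := congrArg e h
  rw [e_emb, e_emb] at this
  exact Polynomial.C_injective this

/-- Decomposition: every `F` is `q3 * G + y * emb f1 + emb f0`. -/
lemma decomp (F : R3) : ∃ G : R3, ∃ f1 f0 : A2,
    F = q3 * G + X 1 * emb f1 + emb f0 := by
  set p := e F with hp
  set r := p %ₘ mPA with hr
  have hdeg : r.degree ≤ 1 := by
    have h2 : mPA.degree = 2 := by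
      have := Polynomial.degree_X_pow_sub_C (n := 2) (by norm_num) (X 0 * X 1 : A2)
      simpa [mPA] using this
    have := Polynomial.degree_modByMonic_lt p mPA_monic
    rw [h2] at this
    exact Order.le_of_lt_succ (by exact_mod_cast this)
  refine ⟨e.symm (-(p /ₘ mPA)), r.coeff 1, r.coeff 0, ?_⟩
  apply e.injective
  rw [map_add, map_add, map_mul, map_mul, e_q3, e_X1, AlgEquiv.apply_symm_apply,
    e_emb, e_emb]
  have hre : r = Polynomial.C (r.coeff 1) * Polynomial.X + Polynomial.C (r.coeff 0) :=
    Polynomial.eq_X_add_C_of_degree_le_one hdeg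
  have hdiv := Polynomial.modByMonic_add_div p mPA
  rw [← hp]
  symm
  have hXC : Polynomial.X * Polynomial.C (r.coeff 1) + Polynomial.C (r.coeff 0) = r := by
    linear_combination -hre
  calc -mPA * -(p /ₘ mPA) + Polynomial.X * Polynomial.C (r.coeff 1) + Polynomial.C (r.coeff 0)
      = mPA * (p /ₘ mPA) + (Polynomial.X * Polynomial.C (r.coeff 1) + Polynomial.C (r.coeff 0)) := by
        ring
    _ = r + mPA * (p /ₘ mPA) := by rw [hXC]; ring
    _ = p := by rw [hr]; exact hdiv

lemma uniq {G : R3} {f1 f0 : A2} (h : q3 * G + X 1 * emb f1 + emb f0 = 0) :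
    f1 = 0 ∧ f0 = 0 ∧ G = 0 := by
  have he : -mPA * e G + Polynomial.X * Polynomial.C f1 + Polynomial.C f0 = 0 := by
    have := congrArg e h
    rwa [map_add, map_add, map_mul, map_mul, e_q3, e_X1, e_emb, e_emb, map_zero] at this
  have hdegm : mPA.degree = 2 := by
    have := Polynomial.degree_X_pow_sub_C (n := 2) (by norm_num) (X 0 * X 1 : A2)
    simpa [mPA] using this
  have hG : e G = 0 := by
    by_contra hne
    have hprod : mPA * e G = Polynomial.X * Polynomial.C f1 + Polynomial.C f0 := by
      linear_combination -he
    have hd1 : (Polynomial.X * Polynomial.C f1 + Polynomial.C f0).degree ≤ 1 := by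
      refine le_trans (Polynomial.degree_add_le _ _) ?_
      refine max_le (le_trans (Polynomial.degree_mul_le _ _) ?_) ?_
      · calc Polynomial.X.degree + (Polynomial.C f1).degree
            ≤ 1 + 0 := add_le_add Polynomial.degree_X_le Polynomial.degree_C_le
          _ = 1 := by norm_num
      · exact le_trans Polynomial.degree_C_le (by norm_num)
    have hd2 : (mPA * e G).degree = 2 + (e G).degree := by
      rw [mul_comm, mPA_monic.degree_mul, hdegm, add_comm]
    have hge : (0 : WithBot ℕ) ≤ (e G).degree := Polynomial.zero_le_degree_iff.mpr hne
    have : (2 : WithBot ℕ) ≤ (mPA * e G).degree := by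
      rw [hd2]
      calc (2 : WithBot ℕ) = 2 + 0 := by norm_num
        _ ≤ 2 + (e G).degree := by exact add_le_add le_rfl hge
    rw [hprod] at this
    have : (2 : WithBot ℕ) ≤ 1 := le_trans this hd1
    norm_num at this
  have hG0 : G = 0 := by
    have := congrArg e.symm hG
    simpa using this
  have hr : Polynomial.X * Polynomial.C f1 + Polynomial.C f0 = 0 := by
    rw [hG] at he
    linear_combination he
  constructor
  · have := congrArg (fun p => Polynomial.coeff p 1) hr
    simpa using this
  constructor
  · have := congrArg (fun p => Polynomial.coeff p 0) hr
    simpa using this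
  · exact hG0



def mkS : R3 →+* S :=
  Ideal.Quotient.mk (Ideal.span {(X 0 * X 2 - X 1 ^ 2 : MvPolynomial (Fin 3) ℂ)})

lemma mkS_X0 : mkS (X 0) = xx := rfl
lemma mkS_X1 : mkS (X 1) = yy := rfl
lemma mkS_X2 : mkS (X 2) = ww := rfl

lemma mkS_surjective : Function.Surjective mkS := Ideal.Quotient.mk_surjective

lemma mkS_eq_zero_iff (F : R3) : mkS F = 0 ↔ ∃ G, F = q3 * G := by
  rw [mkS, Ideal.Quotient.eq_zero_iff_mem, Ideal.mem_span_singleton, show (X 0 * X 2 - X 1 ^ 2 : MvPolynomial (Fin 3) ℂ) = q3 from rfl]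
  constructor
  · rintro ⟨G, h⟩; exact ⟨G, h⟩
  · rintro ⟨G, h⟩; exact ⟨G, h⟩

lemma hxw : xx * ww = yy * yy := by
  have : mkS q3 = 0 := (mkS_eq_zero_iff q3).mpr ⟨1, (mul_one _).symm⟩
  rw [q3] at this
  rw [← mkS_X0, ← mkS_X1, ← mkS_X2, ← map_mul, ← map_mul]
  rw [map_sub, map_mul, map_pow, sub_eq_zero] at this
  rw [map_mul, map_mul]
  rw [this]; ring

lemma X0_ne_dvd_X1 : ¬ (X 0 : A2) ∣ X 1 := by
  rintro ⟨g, hg⟩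
  have := congrArg (eval fun i : Fin 2 => if i = 0 then (0 : ℂ) else 1) hg
  simp at this

lemma primeX0 : Prime (X 0 : A2) := by
  rw [← MulEquiv.prime_iff (finSuccEquiv ℂ 1).toMulEquiv]
  have : (finSuccEquiv ℂ 1).toMulEquiv (X 0 : A2) = Polynomial.X := by
    simp [finSuccEquiv_X_zero]
  rw [this]
  exact Polynomial.prime_X

lemma xreg (s : S) (h : xx * s = 0) : s = 0 := by
  obtain ⟨F, rfl⟩ := mkS_surjective s
  have h' : mkS (X 0 * F) = 0 := by rw [map_mul, mkS_X0]; exact h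
  obtain ⟨H, hH⟩ := (mkS_eq_zero_iff _).mp h'
  obtain ⟨G, f1, f0, hF⟩ := decomp F
  have hcomb : q3 * (X 0 * G - H) + X 1 * emb (X 0 * f1) + emb (X 0 * f0) = 0 := by
    have e1 : emb (X 0 * f1) = X 0 * emb f1 := by rw [map_mul, emb_X0]
    have e0 : emb (X 0 * f0) = X 0 * emb f0 := by rw [map_mul, emb_X0]
    rw [e1, e0]
    linear_combination hH - X 0 * hF
  obtain ⟨h1, h0, -⟩ := uniq hcomb
  have hf1 : f1 = 0 := by
    rcases mul_eq_zero.mp h1 with h | h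
    · exact absurd h (X_ne_zero 0)
    · exact h
  have hf0 : f0 = 0 := by
    rcases mul_eq_zero.mp h0 with h | h
    · exact absurd h (X_ne_zero 0)
    · exact h
  rw [hf1, hf0, map_zero, mul_zero, add_zero, add_zero] at hF
  exact (mkS_eq_zero_iff F).mpr ⟨G, hF⟩

lemma key (a b c : S) (h1 : yy * a = xx * b) (h2 : yy * b = xx * c) :
    ∃ t : S, a = xx * t ∧ b = yy * t ∧ c = ww * t := by
  obtain ⟨A, rfl⟩ := mkS_surjective a
  obtain ⟨B, rfl⟩ := mkS_surjective b
  obtain ⟨C, rfl⟩ := mkS_surjective c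
  have h1' : mkS (X 1 * A - X 0 * B) = 0 := by
    rw [map_sub, map_mul, map_mul, mkS_X0, mkS_X1, sub_eq_zero]; exact h1
  have h2' : mkS (X 1 * B - X 0 * C) = 0 := by
    rw [map_sub, map_mul, map_mul, mkS_X0, mkS_X1, sub_eq_zero]; exact h2
  obtain ⟨H1, hH1⟩ := (mkS_eq_zero_iff _).mp h1'
  obtain ⟨H2, hH2⟩ := (mkS_eq_zero_iff _).mp h2'
  obtain ⟨GA, a1, a0, hA⟩ := decomp A
  obtain ⟨GB, b1, b0, hB⟩ := decomp B
  obtain ⟨GC, c1, c0, hC⟩ := decomp C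
  have hq3 : q3 = X 0 * X 2 - X 1 ^ 2 := rfl
  -- first relation
  have hcomb1 : q3 * (X 1 * GA - X 0 * GB - emb a1 - H1)
      + X 1 * emb (a0 - X 0 * b1) + emb (X 0 * X 1 * a1 - X 0 * b0) = 0 := by
    have e1 : emb (a0 - X 0 * b1) = emb a0 - X 0 * emb b1 := by
      simp only [map_sub, map_mul, emb_X0, emb_X1]
    have e0 : emb (X 0 * X 1 * a1 - X 0 * b0)
        = X 0 * X 2 * emb a1 - X 0 * emb b0 := by
      simp only [map_sub, map_mul, emb_X0, emb_X1]
    rw [e1, e0]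
    linear_combination hH1 - X 1 * hA + X 0 * hB - (emb a1) * hq3
  obtain ⟨r1, r0, -⟩ := uniq hcomb1
  have ha0 : a0 = X 0 * b1 := sub_eq_zero.mp r1
  have hb0 : b0 = X 1 * a1 := by
    have := sub_eq_zero.mp r0
    have := mul_left_cancel₀ (X_ne_zero (R := ℂ) (σ := Fin 2) 0)
      (by linear_combination this : (X 0 : A2) * (X 1 * a1) = X 0 * b0)
    exact this.symm
  -- second relation
  have hcomb2 : q3 * (X 1 * GB - X 0 * GC - emb b1 - H2)
      + X 1 * emb (b0 - X 0 * c1) + emb (X 0 * X 1 * b1 - X 0 * c0) = 0 := by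
    have e1 : emb (b0 - X 0 * c1) = emb b0 - X 0 * emb c1 := by
      simp only [map_sub, map_mul, emb_X0, emb_X1]
    have e0 : emb (X 0 * X 1 * b1 - X 0 * c0)
        = X 0 * X 2 * emb b1 - X 0 * emb c0 := by
      simp only [map_sub, map_mul, emb_X0, emb_X1]
    rw [e1, e0]
    linear_combination hH2 - X 1 * hB + X 0 * hC - (emb b1) * hq3
  obtain ⟨s1, s0, -⟩ := uniq hcomb2
  have hb0' : b0 = X 0 * c1 := sub_eq_zero.mp s1
  have hc0 : c0 = X 1 * b1 := by
    have := sub_eq_zero.mp s0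
    have := mul_left_cancel₀ (X_ne_zero (R := ℂ) (σ := Fin 2) 0)
      (by linear_combination this : (X 0 : A2) * (X 1 * b1) = X 0 * c0)
    exact this.symm
  -- divisibility
  have hdvd : (X 0 : A2) ∣ a1 := by
    have : (X 0 : A2) ∣ X 1 * a1 := ⟨c1, by rw [← hb0, hb0']⟩
    rcases (primeX0.dvd_mul).mp this with h | h
    · exact absurd h X0_ne_dvd_X1
    · exact h
  obtain ⟨t1, ht1⟩ := hdvd
  have hc1 : c1 = X 1 * t1 := by
    apply mul_left_cancel₀ (X_ne_zero (R := ℂ) (σ := Fin 2) 0)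
    rw [← hb0', hb0, ht1]; ring
  -- the witness
  refine ⟨mkS (X 1 * emb t1 + emb b1), ?_, ?_, ?_⟩
  · rw [← mkS_X0, ← map_mul, ← sub_eq_zero, ← map_sub]
    apply (mkS_eq_zero_iff _).mpr
    refine ⟨GA, ?_⟩
    have eA1 : emb a1 = X 0 * emb t1 := by rw [ht1, map_mul, emb_X0]
    have eA0 : emb a0 = X 0 * emb b1 := by rw [ha0, map_mul, emb_X0]
    linear_combination hA + X 1 * eA1 + eA0
  · rw [← mkS_X1, ← map_mul, ← sub_eq_zero, ← map_sub]
    apply (mkS_eq_zero_iff _).mpr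
    refine ⟨GB + emb t1, ?_⟩
    have eB0 : emb b0 = X 2 * (X 0 * emb t1) := by
      rw [hb0, ht1]; simp only [map_mul, emb_X0, emb_X1]; try ring
    linear_combination hB + eB0 - (emb t1) * hq3
  · rw [← mkS_X2, ← map_mul, ← sub_eq_zero, ← map_sub]
    apply (mkS_eq_zero_iff _).mpr
    refine ⟨GC, ?_⟩
    have eC1 : emb c1 = X 2 * emb t1 := by rw [hc1, map_mul, emb_X1]
    have eC0 : emb c0 = X 2 * emb b1 := by rw [hc0, map_mul, emb_X1]
    linear_combination hC + X 1 * eC1 + eC0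

/-- linear functional on `S⁴` given by dotting with `v`. -/
def dotL (v : Fin 4 → S) : (Fin 4 → S) →ₗ[S] S :=
  ∑ i, v i • LinearMap.proj i

lemma dotL_apply (v u : Fin 4 → S) : dotL v u = ∑ i, v i * u i := by
  simp [dotL, LinearMap.sum_apply]

lemma dotL_single (v : Fin 4 → S) (i : Fin 4) : dotL v (Pi.single i 1) = v i := by
  rw [dotL_apply]
  rw [Finset.sum_eq_single i]
  · simp
  · intro j _ hj; simp [Pi.single_apply, hj]
  · intro h; exact absurd (Finset.mem_univ i) h

lemma relMap_single (j : Fin 4) : relMap (Pi.single j 1) = fun i => relMatrix i j := by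
  rw [relMap, Matrix.toLin'_apply, Matrix.mulVec_single]
  simp; rfl

lemma dot_rel_zero (v : Fin 4 → S)
    (hv : ∀ j : Fin 4, ∑ i, v i * relMatrix i j = 0) (u : Fin 4 → S) :
    dotL v (relMap u) = 0 := by
  have : (dotL v).comp relMap = 0 := by
    apply (Pi.basisFun S (Fin 4)).ext
    intro j
    simp only [LinearMap.comp_apply, Pi.basisFun_apply, LinearMap.zero_apply]
    rw [relMap_single, dotL_apply]
    exact hv j
  exact congrArg (fun f => f u) (congrArg DFunLike.coe this)

def vφ : Fin 4 → S := ![xx, yy, ww, 0]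
def vψ : Fin 4 → S := ![0, 0, 0, 1]

lemma vφ_rel (j : Fin 4) : ∑ i, vφ i * relMatrix i j = 0 := by
  fin_cases j
  · simp [Fin.sum_univ_four, vφ, relMatrix, Matrix.vecHead, Matrix.vecTail]
    ring
  · simp [Fin.sum_univ_four, vφ, relMatrix, Matrix.vecHead, Matrix.vecTail]
    linear_combination hxw
  · simp [Fin.sum_univ_four, vφ, relMatrix, Matrix.vecHead, Matrix.vecTail]
    linear_combination -hxw
  · simp [Fin.sum_univ_four, vφ, relMatrix, Matrix.vecHead, Matrix.vecTail]
    ring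

def φ : Module.Dual S M :=
  Submodule.liftQ (LinearMap.range relMap) (dotL vφ)
    (by
      rintro u ⟨w', rfl⟩
      exact dot_rel_zero vφ vφ_rel w')

def ψ : Module.Dual S M :=
  Submodule.liftQ (LinearMap.range relMap) (dotL vψ)
    (by
      rintro u ⟨w', rfl⟩
      refine dot_rel_zero vψ ?_ w'
      intro j
      fin_cases j <;> simp [Fin.sum_univ_four, vψ, relMatrix, Matrix.vecHead, Matrix.vecTail])

lemma φ_gen (i : Fin 4) : φ (gen i) = vφ i := by
  rw [gen, φ]
  exact dotL_single vφ i

lemma ψ_gen (i : Fin 4) : ψ (gen i) = vψ i := by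
  rw [gen, ψ]
  exact dotL_single vψ i

lemma mk_eq_sum (v : Fin 4 → S) :
    (Submodule.Quotient.mk v : M) = ∑ i, v i • gen i := by
  have hv : v = ∑ i : Fin 4, v i • (Pi.single i (1 : S) : Fin 4 → S) := by
    funext j
    rw [Finset.sum_apply]
    simp [Pi.single_apply]
  calc (Submodule.Quotient.mk v : M)
      = Submodule.Quotient.mk (∑ i : Fin 4, v i • (Pi.single i (1 : S) : Fin 4 → S)) := by
        rw [← hv]
    _ = ∑ i, v i • gen i := by
        rw [← Submodule.mkQ_apply, map_sum]
        simp [gen, Submodule.mkQ_apply]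

lemma genSpan : Submodule.span S (Set.range gen) = ⊤ := by
  rw [eq_top_iff]
  rintro m -
  obtain ⟨v, rfl⟩ := Submodule.Quotient.mk_surjective _ m
  rw [mk_eq_sum]
  exact Submodule.sum_mem _ fun i _ =>
    Submodule.smul_mem _ _ (Submodule.subset_span ⟨i, rfl⟩)

lemma dual_rel (α : Module.Dual S M) (j : Fin 4) :
    ∑ i, relMatrix i j * α (gen i) = 0 := by
  have hmem : (fun i => relMatrix i j) ∈ LinearMap.range relMap :=
    ⟨Pi.single j 1, relMap_single j⟩
  have h0 : (Submodule.Quotient.mk (fun i => relMatrix i j) : M) = 0 :=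
    (Submodule.Quotient.mk_eq_zero _).mpr hmem
  have := congrArg α h0
  rw [mk_eq_sum, map_sum, map_zero] at this
  simpa [smul_eq_mul] using this

lemma dual_repr (α : Module.Dual S M) : ∃ t s : S, α = t • φ + s • ψ := by
  have h0 := dual_rel α 0
  have h2 := dual_rel α 2
  rw [Fin.sum_univ_four] at h0 h2
  rw [show relMatrix 0 0 = yy from rfl, show relMatrix 1 0 = -xx from rfl,
    show relMatrix 2 0 = 0 from rfl, show relMatrix 3 0 = 0 from rfl] at h0
  rw [show relMatrix 0 2 = 0 from rfl, show relMatrix 1 2 = yy from rfl,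
    show relMatrix 2 2 = -xx from rfl, show relMatrix 3 2 = 0 from rfl] at h2
  have h1 : yy * α (gen 0) = xx * α (gen 1) := by linear_combination h0
  have h2' : yy * α (gen 1) = xx * α (gen 2) := by linear_combination h2
  obtain ⟨t, ht0, ht1, ht2⟩ := key _ _ _ h1 h2'
  refine ⟨t, α (gen 3), ?_⟩
  apply LinearMap.ext_on genSpan
  rintro _ ⟨i, rfl⟩
  have e0 : φ (gen 0) = xx := (φ_gen 0).trans rfl
  have e1 : φ (gen 1) = yy := (φ_gen 1).trans rfl
  have e2 : φ (gen 2) = ww := (φ_gen 2).trans rfl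
  have e3 : φ (gen 3) = 0 := (φ_gen 3).trans rfl
  have f0 : ψ (gen 0) = 0 := (ψ_gen 0).trans rfl
  have f1 : ψ (gen 1) = 0 := (ψ_gen 1).trans rfl
  have f2 : ψ (gen 2) = 0 := (ψ_gen 2).trans rfl
  have f3 : ψ (gen 3) = 1 := (ψ_gen 3).trans rfl
  fin_cases i
  · show α (gen 0) = (t • φ + α (gen 3) • ψ) (gen 0)
    simp only [LinearMap.add_apply, LinearMap.smul_apply, smul_eq_mul, e0, f0]
    rw [ht0]; ring
  · show α (gen 1) = (t • φ + α (gen 3) • ψ) (gen 1)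
    simp only [LinearMap.add_apply, LinearMap.smul_apply, smul_eq_mul, e1, f1]
    rw [ht1]; ring
  · show α (gen 2) = (t • φ + α (gen 3) • ψ) (gen 2)
    simp only [LinearMap.add_apply, LinearMap.smul_apply, smul_eq_mul, e2, f2]
    rw [ht2]; ring
  · show α (gen 3) = (t • φ + α (gen 3) • ψ) (gen 3)
    simp only [LinearMap.add_apply, LinearMap.smul_apply, smul_eq_mul, e3, f3]
    ring

lemma φψ_indep : LinearIndependent S ![φ, ψ] := by
  rw [Fintype.linearIndependent_iff]
  intro g hg i
  rw [Fin.sum_univ_two] at hg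
  have hg0 : g 0 • φ + g 1 • ψ = 0 := by
    simpa using hg
  have h3 := congrArg (fun α : Module.Dual S M => α (gen 3)) hg0
  have h0 := congrArg (fun α : Module.Dual S M => α (gen 0)) hg0
  simp only [LinearMap.add_apply, LinearMap.smul_apply, smul_eq_mul,
    LinearMap.zero_apply] at h3 h0
  have hφ3 : φ (gen 3) = 0 := (φ_gen 3).trans rfl
  have hψ3 : ψ (gen 3) = 1 := (ψ_gen 3).trans rfl
  have hφ0 : φ (gen 0) = xx := (φ_gen 0).trans rfl
  have hψ0 : ψ (gen 0) = 0 := (ψ_gen 0).trans rfl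
  rw [hφ3, hψ3] at h3
  rw [hφ0, hψ0] at h0
  have hg1 : g 1 = 0 := by simpa using h3
  have hg00 : g 0 = 0 := by
    apply xreg
    rw [hg1] at h0
    simpa [mul_comm] using h0
  fin_cases i
  · exact hg00
  · exact hg1

lemma φψ_span : ⊤ ≤ Submodule.span S (Set.range ![φ, ψ]) := by
  rintro α -
  obtain ⟨t, s, rfl⟩ := dual_repr α
  exact Submodule.add_mem _
    (Submodule.smul_mem _ _ (Submodule.subset_span ⟨0, rfl⟩))
    (Submodule.smul_mem _ _ (Submodule.subset_span ⟨1, rfl⟩))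

def Bdual : Module.Basis (Fin 2) S (Module.Dual S M) := Module.Basis.mk φψ_indep φψ_span

lemma Bdual0 : Bdual 0 = φ := by rw [Bdual, Module.Basis.mk_apply]; rfl
lemma Bdual1 : Bdual 1 = ψ := by rw [Bdual, Module.Basis.mk_apply]; rfl

def Isp : Ideal S := Ideal.span {xx, yy, ww}

def Θ : Module.Dual S (Module.Dual S M) →ₗ[S] (S ⧸ Isp) :=
  (Submodule.mkQ (Isp : Submodule S S)).comp (LinearMap.applyₗ φ)

lemma Θ_apply (Ξ : Module.Dual S (Module.Dual S M)) :
    Θ Ξ = Submodule.Quotient.mk (Ξ φ) := rfl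

lemma Θ_surj : Function.Surjective Θ := by
  intro z
  obtain ⟨s, rfl⟩ := Submodule.mkQ_surjective _ z
  refine ⟨s • Bdual.coord 0, ?_⟩
  rw [Θ_apply]
  have : (Bdual.coord 0) φ = 1 := by
    rw [← Bdual0, Module.Basis.coord_apply, Module.Basis.repr_self]
    simp
  simp [this, smul_eq_mul]

lemma xx_mem_Isp : xx ∈ Isp := Ideal.subset_span (by simp)
lemma yy_mem_Isp : yy ∈ Isp := Ideal.subset_span (by simp)
lemma ww_mem_Isp : ww ∈ Isp := Ideal.subset_span (by simp)

lemma mem_Isp (s : S) (h : s ∈ Isp) : ∃ p q r, s = p * xx + q * yy + r * ww := by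
  have h' : s ∈ Submodule.span S (insert xx (insert yy ({ww} : Set S))) := h
  rw [Submodule.mem_span_insert] at h'
  obtain ⟨p, z, hz, rfl⟩ := h'
  rw [Submodule.mem_span_insert] at hz
  obtain ⟨q, z', hz', rfl⟩ := hz
  rw [Submodule.mem_span_singleton] at hz'
  obtain ⟨r, rfl⟩ := hz'
  exact ⟨p, q, r, by simp only [smul_eq_mul]; ring⟩

lemma φ_mem (m : M) : φ m ∈ Isp := by
  obtain ⟨v, rfl⟩ := Submodule.Quotient.mk_surjective _ m
  have hv : φ (Submodule.Quotient.mk v) = xx * v 0 + (yy * v 1 + ww * v 2) := by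
    show dotL vφ v = _
    rw [dotL_apply, Fin.sum_univ_four,
      show vφ 0 = xx from rfl, show vφ 1 = yy from rfl,
      show vφ 2 = ww from rfl, show vφ 3 = 0 from rfl]
    ring
  rw [hv]
  exact Submodule.add_mem _ (Ideal.mul_mem_right _ _ xx_mem_Isp)
    (Submodule.add_mem _ (Ideal.mul_mem_right _ _ yy_mem_Isp)
      (Ideal.mul_mem_right _ _ ww_mem_Isp))

lemma ker_Θ : LinearMap.ker Θ = LinearMap.range (Module.Dual.eval S M) := by
  ext Ξ
  constructor
  · intro hΞ
    rw [LinearMap.mem_ker, Θ_apply, Submodule.Quotient.mk_eq_zero] at hΞ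
    obtain ⟨p, q, r, hpqr⟩ := mem_Isp _ hΞ
    refine ⟨p • gen 0 + q • gen 1 + r • gen 2 + (Ξ ψ) • gen 3, ?_⟩
    apply Module.Basis.ext Bdual
    intro i
    fin_cases i
    · show (Module.Dual.eval S M) _ (Bdual 0) = Ξ (Bdual 0)
      rw [Bdual0, Module.Dual.eval_apply]
      rw [map_add, map_add, map_add, map_smul, map_smul, map_smul, map_smul]
      have g0 : φ (gen 0) = xx := (φ_gen 0).trans rfl
      have g1 : φ (gen 1) = yy := (φ_gen 1).trans rfl
      have g2 : φ (gen 2) = ww := (φ_gen 2).trans rfl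
      have g3 : φ (gen 3) = 0 := (φ_gen 3).trans rfl
      rw [g0, g1, g2, g3, hpqr]
      simp only [smul_eq_mul]
      ring
    · show (Module.Dual.eval S M) _ (Bdual 1) = Ξ (Bdual 1)
      rw [Bdual1, Module.Dual.eval_apply]
      rw [map_add, map_add, map_add, map_smul, map_smul, map_smul, map_smul]
      have g0 : ψ (gen 0) = 0 := (ψ_gen 0).trans rfl
      have g1 : ψ (gen 1) = 0 := (ψ_gen 1).trans rfl
      have g2 : ψ (gen 2) = 0 := (ψ_gen 2).trans rfl
      have g3 : ψ (gen 3) = 1 := (ψ_gen 3).trans rfl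
      rw [g0, g1, g2, g3]
      simp only [smul_eq_mul]
      ring
  · rintro ⟨m, rfl⟩
    rw [LinearMap.mem_ker, Θ_apply, Module.Dual.eval_apply]
    exact (Submodule.Quotient.mk_eq_zero _).mpr (φ_mem m)

/-- The cokernel of `eval` is isomorphic to `S ⧸ (x,y,w)`. -/
def cokerEquiv :
    (Module.Dual S (Module.Dual S M) ⧸ LinearMap.range (Module.Dual.eval S M))
      ≃ₗ[S] S ⧸ Isp :=
  (Submodule.quotEquivOfEq _ _ ker_Θ.symm).trans
    (LinearMap.quotKerEquivOfSurjective Θ Θ_surj)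

def JX : Ideal R3 := Ideal.span {X 0, X 1, X 2}

lemma X_mem_JX (i : Fin 3) : X i ∈ JX := by
  fin_cases i <;> exact Ideal.subset_span (by simp)

lemma sub_C_mem_JX (F : R3) : F - C (constantCoeff F) ∈ JX := by
  induction F using MvPolynomial.induction_on with
  | C a => simp
  | add p q hp hq =>
      have h := Submodule.add_mem JX hp hq
      have : p + q - C (constantCoeff (p + q))
          = (p - C (constantCoeff p)) + (q - C (constantCoeff q)) := by
        rw [map_add, C_add]; ring
      rw [this]; exact h
  | mul_X p i hp =>
      have h0 : constantCoeff (p * X i) = 0 := by simp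
      rw [h0, map_zero, sub_zero]
      exact Ideal.mul_mem_left _ p (X_mem_JX i)

lemma q3_mem_JX : q3 ∈ JX := by
  rw [q3]
  exact Submodule.sub_mem _ (Ideal.mul_mem_right _ _ (X_mem_JX 0))
    (by rw [pow_two]; exact Ideal.mul_mem_right _ _ (X_mem_JX 1))

lemma Isp_eq_map : Isp = Ideal.map mkS JX := by
  rw [Isp, JX, Ideal.map_span]
  congr 1
  rw [Set.image_insert_eq, Set.image_insert_eq, Set.image_singleton]
  rfl

lemma one_notin_Isp : (1 : S) ∉ Isp := by
  intro h1
  rw [Isp_eq_map] at h1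
  obtain ⟨F, hF, hF1⟩ := Ideal.mem_image_of_mem_map_of_surjective mkS mkS_surjective h1
  have h0 : mkS (F - 1) = 0 := by rw [map_sub, hF1, map_one, sub_self]
  obtain ⟨G, hG⟩ := (mkS_eq_zero_iff _).mp h0
  have h1J : (1 : R3) ∈ JX := by
    have he : (1 : R3) = F - q3 * G := by rw [← hG]; ring
    rw [he]
    exact Submodule.sub_mem _ hF (Ideal.mul_mem_right _ _ q3_mem_JX)
  have hle : JX ≤ RingHom.ker (constantCoeff : R3 →+* ℂ) := by
    rw [JX, Ideal.span_le]
    intro x hx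
    simp only [Set.mem_insert_iff, Set.mem_singleton_iff] at hx
    rcases hx with rfl | rfl | rfl <;> simp [RingHom.mem_ker]
  have : constantCoeff (1 : R3) = 0 := hle h1J
  simp at this

lemma algebraMap_mkS (c : ℂ) : (algebraMap ℂ S) c = mkS (C c) := by
  rw [IsScalarTower.algebraMap_apply ℂ R3 S]
  rfl

lemma smul_one_eq (c : ℂ) : c • (1 : S) = mkS (C c) := by
  rw [← algebraMap_mkS]
  exact (Algebra.algebraMap_eq_smul_one c).symm

lemma quot_spanning (z : S ⧸ (Isp : Submodule S S)) :
    ∃ c : ℂ, c • (Submodule.Quotient.mk (1 : S) : S ⧸ (Isp : Submodule S S)) = z := by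
  obtain ⟨s, rfl⟩ := Submodule.mkQ_surjective _ z
  obtain ⟨F, rfl⟩ := mkS_surjective s
  refine ⟨constantCoeff F, ?_⟩
  have h1 : (constantCoeff F : ℂ) • (Submodule.Quotient.mk (1 : S) : S ⧸ (Isp : Submodule S S))
      = Submodule.Quotient.mk ((constantCoeff F : ℂ) • (1 : S)) := by
    rw [← Submodule.Quotient.mk_smul]
  rw [Submodule.mkQ_apply, h1, smul_one_eq]
  rw [Submodule.Quotient.eq]
  have : mkS (C (constantCoeff F)) - mkS F = mkS (C (constantCoeff F) - F) := by
    rw [map_sub]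
  rw [this, Isp_eq_map]
  refine Ideal.mem_map_of_mem _ ?_
  have := Submodule.neg_mem JX (sub_C_mem_JX F)
  simpa using this

lemma mk_one_ne_zero :
    (Submodule.Quotient.mk (1 : S) : S ⧸ (Isp : Submodule S S)) ≠ 0 := by
  rw [Ne, Submodule.Quotient.mk_eq_zero]
  exact one_notin_Isp

lemma rank_SIsp : Module.rank ℂ (S ⧸ (Isp : Submodule S S)) = 1 :=
  rank_eq_one _ mk_one_ne_zero quot_spanning

/-- The cokernel of the evaluation map `ev : M → M^∨∨` is a 1-dimensional
ℂ-vector space: the length of `Q = M^∨∨/M` is `1`. -/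
theorem coker_eval_one_dimensional :
    Module.rank ℂ
      (Module.Dual S (Module.Dual S M) ⧸ LinearMap.range (Module.Dual.eval S M)) = 1 := by
  have e2 := (cokerEquiv.restrictScalars ℂ).rank_eq
  rw [e2, rank_SIsp]
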